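/- Let B be SPD, u* ≠ 0, x* = B^{1/2}u*/‖B^{1/2}u*‖, and define cos φ via sin φ = ‖u*‖²/(‖u*‖_B‖u*‖_{B⁻¹}) with φ ∈ (0,π/2]. Then for every unit vector x ∈ ℝⁿ with arccos(xᵀx*) < φ, it holds that xᵀB⁻¹x* ≥ (‖u*‖²_{B⁻¹}/‖u*‖²)·(xᵀx* − cos φ). -/

import Mathlib

open Matrix

private lemma aux_scalar (a b d c p s t : ℝ) (ha : 0 < a) (hb : 0 < b) (hd : 0 < d)
    (hs : s = a / (b * d)) (hs1 : s ≤ 1)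
    (hp : 0 ≤ p) (hp2 : p ^ 2 = 1 - c ^ 2)
    (ht : 0 ≤ t) (ht2 : t ^ 2 = 1 - s ^ 2) :
    (d ^ 2 / a) * (c - t) ≤ c * a / b ^ 2 - p * d * t / b := by
  have hs0 : 0 < s := by rw [hs]; positivity
  have hp1 : p ≤ 1 := by nlinarith
  have key : p * s + c * t ≤ 1 := by
    rcases le_or_gt c 0 with h | h
    · nlinarith
    · nlinarith [sq_nonneg (p * t - c * s)]
  have ha' : a = s * b * d := by
    rw [hs]; field_simp
  have expand : c * a / b ^ 2 - p * d * t / b - (d ^ 2 / a) * (c - t)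
      = (d / (s * b)) * (t * (1 - p * s - c * t)) := by
    rw [ha']
    field_simp
    linear_combination c * ht2
  nlinarith [mul_nonneg (le_of_lt (div_pos hd (mul_pos hs0 hb)))
    (mul_nonneg ht (by linarith : (0:ℝ) ≤ 1 - p * s - c * t)), expand]

private lemma cs_dot {n : ℕ} (y z : Fin n → ℝ) :
    (y ⬝ᵥ z) ^ 2 ≤ (y ⬝ᵥ y) * (z ⬝ᵥ z) := by
  have h := Finset.sum_mul_sq_le_sq_mul_sq Finset.univ y z
  simpa [dotProduct, sq] using h

private lemma dot_self_nonneg {n : ℕ} (y : Fin n → ℝ) : 0 ≤ y ⬝ᵥ y :=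
  Finset.sum_nonneg fun i _ => mul_self_nonneg (y i)

set_option maxHeartbeats 1000000 in
theorem stmt_4 {n : ℕ} (B S : Matrix (Fin n) (Fin n) ℝ) (hB : B.PosDef)
    (hS : S.PosDef) (hSB : S * S = B)
    (u : Fin n → ℝ) (hu : u ≠ 0)
    (xstar : Fin n → ℝ)
    (hxstar : xstar = (Real.sqrt (u ⬝ᵥ B.mulVec u))⁻¹ • S.mulVec u)
    (φ : ℝ)
    (hφ : φ = Real.arcsin
      ((u ⬝ᵥ u) / (Real.sqrt (u ⬝ᵥ B.mulVec u) * Real.sqrt (u ⬝ᵥ B⁻¹.mulVec u))))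
    (x : Fin n → ℝ) (hx : x ⬝ᵥ x = 1)
    (hdist : Real.arccos (x ⬝ᵥ xstar) < φ) :
    x ⬝ᵥ B⁻¹.mulVec xstar ≥
      (u ⬝ᵥ B⁻¹.mulVec u) / (u ⬝ᵥ u) * (x ⬝ᵥ xstar - Real.cos φ) := by
  classical
  have hdet : IsUnit S.det := isUnit_iff_ne_zero.2 (ne_of_gt hS.det_pos)
  have hSS : S⁻¹ * S = 1 := Matrix.nonsing_inv_mul S hdet
  have hSS' : S * S⁻¹ = 1 := Matrix.mul_nonsing_inv S hdet
  have hSsym : Sᵀ = S := by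
    rw [← Matrix.conjTranspose_eq_transpose_of_trivial]; exact hS.1
  have hSisym : (S⁻¹)ᵀ = S⁻¹ := by rw [Matrix.transpose_nonsing_inv, hSsym]
  have hBinv : B⁻¹ = S⁻¹ * S⁻¹ := by rw [← hSB, Matrix.mul_inv_rev]
  set β := u ⬝ᵥ B.mulVec u with hβdef
  set γ := u ⬝ᵥ B⁻¹.mulVec u with hγdef
  set a := u ⬝ᵥ u with hadef
  have hβ : 0 < β := by simpa using hB.dotProduct_mulVec_pos hu
  have hγ : 0 < γ := by simpa using hB.inv.dotProduct_mulVec_pos hu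
  have ha : 0 < a := by
    rcases (dot_self_nonneg u).lt_or_eq with h | h
    · exact h
    · exact absurd (dotProduct_self_eq_zero.1 h.symm) hu
  set b := Real.sqrt β with hbdef
  set d := Real.sqrt γ with hddef
  have hb : 0 < b := Real.sqrt_pos.2 hβ
  have hd : 0 < d := Real.sqrt_pos.2 hγ
  have hb2 : b ^ 2 = β := Real.sq_sqrt hβ.le
  have hd2 : d ^ 2 = γ := Real.sq_sqrt hγ.le
  set w := S⁻¹.mulVec u with hwdef
  -- dot product computations
  have hvm : ∀ z : Fin n → ℝ, z ᵥ* S = S *ᵥ z := fun z => by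
    rw [← hSsym, Matrix.mulVec_transpose, hSsym]
  have hvm' : ∀ z : Fin n → ℝ, z ᵥ* S⁻¹ = S⁻¹ *ᵥ z := fun z => by
    rw [← hSisym, Matrix.mulVec_transpose, hSisym]
  have h1 : (S *ᵥ u) ⬝ᵥ (S *ᵥ u) = β := by
    rw [hβdef, ← hSB, ← Matrix.mulVec_mulVec, Matrix.dotProduct_mulVec, hvm]
    exact dotProduct_comm _ _
  have h2 : w ⬝ᵥ (S *ᵥ u) = a := by
    rw [Matrix.dotProduct_mulVec, hvm, hwdef, Matrix.mulVec_mulVec, hSS',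
      Matrix.one_mulVec]
  have h3 : w ⬝ᵥ w = γ := by
    rw [hγdef, hBinv, ← Matrix.mulVec_mulVec, Matrix.dotProduct_mulVec, hvm', hwdef]
    exact dotProduct_comm _ _
  have h4 : B⁻¹.mulVec xstar = b⁻¹ • w := by
    rw [hxstar, Matrix.mulVec_smul, hBinv, Matrix.mulVec_mulVec, Matrix.mul_assoc,
      hSS, Matrix.mul_one, hwdef]
  have h5 : xstar ⬝ᵥ xstar = 1 := by
    rw [hxstar, dotProduct_smul, smul_dotProduct, h1]
    simp only [smul_eq_mul]
    rw [← hb2]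
    field_simp
  have h6 : xstar ⬝ᵥ w = a / b := by
    rw [hxstar, smul_dotProduct, dotProduct_comm, h2, smul_eq_mul]
    ring
  have hw6 : w ⬝ᵥ xstar = a / b := by rw [dotProduct_comm]; exact h6
  set c := x ⬝ᵥ xstar with hcdef
  have h7 : x ⬝ᵥ w = (x - c • xstar) ⬝ᵥ (w - (a / b) • xstar) + c * (a / b) := by
    simp only [sub_dotProduct, dotProduct_sub, smul_dotProduct,
      dotProduct_smul, smul_eq_mul]
    simp only [h5, h6, hw6, ← hcdef]
    ring
  set y := x - c • xstar with hydef
  set z := w - (a / b) • xstar with hzdef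
  have hyy : y ⬝ᵥ y = 1 - c ^ 2 := by
    simp only [hydef, sub_dotProduct, dotProduct_sub, smul_dotProduct,
      dotProduct_smul, smul_eq_mul]
    simp only [hx, h5, h6, hw6, ← hcdef, dotProduct_comm xstar x]
    ring
  have hzz : z ⬝ᵥ z = γ - a ^ 2 / β := by
    simp only [hzdef, sub_dotProduct, dotProduct_sub, smul_dotProduct,
      dotProduct_smul, smul_eq_mul]
    simp only [h3, h5, h6, hw6]
    rw [← hb2]
    field_simp
    ring
  -- Cauchy-Schwarz : a ≤ b * d
  have hCS : a ^ 2 ≤ β * γ := by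
    have := cs_dot w (S *ᵥ u)
    rw [h2, h3, h1] at this
    linarith [this]
  set s := a / (b * d) with hsdef
  have hs1 : s ≤ 1 := by
    rw [hsdef, div_le_one (by positivity)]
    nlinarith [hCS, hb2, hd2, mul_pos hb hd, ha, sq_nonneg (a - b * d)]
  have hs0 : 0 < s := by rw [hsdef]; positivity
  have hc2 : c ^ 2 ≤ 1 := by nlinarith [dot_self_nonneg y, hyy]
  set p := Real.sqrt (1 - c ^ 2) with hpdef
  set t := Real.sqrt (1 - s ^ 2) with htdef
  have hp : 0 ≤ p := Real.sqrt_nonneg _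
  have ht : 0 ≤ t := Real.sqrt_nonneg _
  have hp2 : p ^ 2 = 1 - c ^ 2 := Real.sq_sqrt (by linarith)
  have ht2 : t ^ 2 = 1 - s ^ 2 := Real.sq_sqrt (by nlinarith)
  -- cos φ = t
  have hcos : Real.cos φ = t := by
    rw [hφ, Real.cos_arcsin, htdef, hsdef]
  -- lower bound on y ⬝ᵥ z
  have hyz : -(p * (d * t)) ≤ y ⬝ᵥ z := by
    have hcs := cs_dot y z
    rw [hyy, hzz] at hcs
    have hzznn : (0:ℝ) ≤ γ - a ^ 2 / β := by
      rw [← hzz]; exact dot_self_nonneg z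
    have hγs : γ - a ^ 2 / β = γ * (1 - s ^ 2) := by
      rw [hsdef, div_pow, mul_pow, hb2, hd2]
      field_simp
    have hsq : Real.sqrt ((1 - c ^ 2) * (γ - a ^ 2 / β)) = p * (d * t) := by
      rw [hγs, Real.sqrt_mul (by linarith : (0:ℝ) ≤ 1 - c ^ 2),
        Real.sqrt_mul hγ.le]
    have habs : |y ⬝ᵥ z| ≤ p * (d * t) := by
      rw [← Real.sqrt_sq_eq_abs, ← hsq]
      exact Real.sqrt_le_sqrt hcs
    linarith [neg_abs_le (y ⬝ᵥ z), habs]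
  -- put it together
  have hgoal : x ⬝ᵥ B⁻¹.mulVec xstar = b⁻¹ * (x ⬝ᵥ w) := by
    rw [h4, dotProduct_smul, smul_eq_mul]
  rw [ge_iff_le, hgoal, hcos, h7]
  have main := aux_scalar a b d c p s t ha hb hd hsdef hs1 hp hp2 ht ht2
  have hlhs : (γ / a) * (c - t) = (d ^ 2 / a) * (c - t) := by rw [hd2]
  calc γ / a * (c - t) = (d ^ 2 / a) * (c - t) := hlhs
    _ ≤ c * a / b ^ 2 - p * d * t / b := main
    _ ≤ b⁻¹ * (y ⬝ᵥ z + c * (a / b)) := by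
        have hbne : b ≠ 0 := hb.ne'
        have h' : b⁻¹ * (y ⬝ᵥ z + c * (a / b)) - (c * a / b ^ 2 - p * d * t / b)
            = b⁻¹ * (y ⬝ᵥ z + p * (d * t)) := by
          field_simp
          ring
        have h'' : 0 ≤ b⁻¹ * (y ⬝ᵥ z + p * (d * t)) :=
          mul_nonneg (inv_pos.2 hb).le (by linarith [hyz])
        linarith
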